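/- Let p be a prime and let A be an integrally closed domain of characteristic zero in which p is not a unit. Assume that the Frobenius endomorphism of A/pA is surjective and that there exists a sequence (s_n)_{n≥0} of elements of A with s_0 = p and (s_{n+1})^p = s_n for all n. Let p̲ denote the element of the perfection of A/pA whose n-th component is the residue of s_n in A/pA. Then the kernel of the ring homomorphism from the perfection of A/pA to A/pA given by projection onto the 0-th component is the principal ideal generated by p̲. -/

import Mathlib

/-- Let `p` be a prime and `A` an integrally closed domain of
characteristic zero in which `p` is not a unit.  Assume the Frobenius endomorphism of
`A/pA` is surjective and that there is a sequence `(s n)` in `A` with `s 0 = p` and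
`s (n+1) ^ p = s n`.  Let `p̲` be the element of the perfection of `A/pA` whose `n`-th
component is the residue of `s n`.  Then the kernel of the projection of the perfection
of `A/pA` onto its `0`-th component is the principal ideal generated by `p̲`. -/
theorem statement5 (p : ℕ) [hp : Fact p.Prime] (A : Type*) [CommRing A] [IsDomain A]
    [IsIntegrallyClosed A] [CharZero A] (hpu : (p : A) ∈ nonunits A)
    (hF : Function.Surjective fun x : A ⧸ Ideal.span {(p : A)} => x ^ p)
    (s : ℕ → A) (hs0 : s 0 = (p : A)) (hs : ∀ n, s (n + 1) ^ p = s n) :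
    haveI : CharP (A ⧸ Ideal.span {(p : A)}) p := CharP.quotient A p hpu
    ∀ pbar : Perfection (A ⧸ Ideal.span {(p : A)}) p,
      (∀ n, Perfection.coeff (A ⧸ Ideal.span {(p : A)}) p n pbar =
          Ideal.Quotient.mk (Ideal.span {(p : A)}) (s n)) →
      RingHom.ker (Perfection.coeff (A ⧸ Ideal.span {(p : A)}) p 0) =
        Ideal.span {pbar} := by
  haveI : CharP (A ⧸ Ideal.span {(p : A)}) p := CharP.quotient A p hpu
  intro pbar hpbar
  set B := A ⧸ Ideal.span {(p : A)} with hB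
  let π : A →+* B := Ideal.Quotient.mk (Ideal.span {(p : A)})
  have hπ0 : ∀ a : A, π a = 0 ↔ (p : A) ∣ a := by
    intro a
    rw [Ideal.Quotient.eq_zero_iff_mem, Ideal.mem_span_singleton]
  have hπsurj : Function.Surjective π := Ideal.Quotient.mk_surjective
  have hp0 : (p : A) ≠ 0 := Nat.cast_ne_zero.mpr hp.out.ne_zero
  -- s n ^ p ^ n = p
  have hsp : ∀ n, s n ^ p ^ n = (p : A) := by
    intro n
    induction n with
    | zero => simpa using hs0
    | succ n ih => rw [pow_succ', pow_mul, hs n, ih]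
  have hsne : ∀ n, s n ≠ 0 := by
    intro n hn
    apply hp0
    rw [← hsp n, hn, zero_pow (pow_ne_zero n hp.out.ne_zero)]
  -- key divisibility lemma in A
  have hdiv : ∀ n (a : A), (p : A) ∣ a ^ p ^ n → s n ∣ a := by
    intro n a h
    rw [← IsIntegrallyClosed.pow_dvd_pow_iff (pow_ne_zero n hp.out.ne_zero)
      (a := s n) (b := a), hsp n]
    exact h
  -- divisibility lemma in B
  have hdivB : ∀ n (b : B), b ^ p ^ n = 0 → ∃ c : B, b = π (s n) * c := by
    intro n b hb
    obtain ⟨a, rfl⟩ := hπsurj b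
    rw [← map_pow, hπ0] at hb
    obtain ⟨c, hc⟩ := hdiv n a hb
    exact ⟨π c, by rw [hc, map_mul]⟩
  -- cancellation lemma in A
  have hcancel : ∀ n (b : A), (p : A) ∣ s (n + 1) * b → (p : A) ∣ b ^ p := by
    intro n b ⟨a, ha⟩
    have hb : b = s (n + 1) ^ (p ^ (n + 1) - 1) * a := by
      apply mul_left_cancel₀ (hsne (n + 1))
      rw [ha, ← hsp (n + 1), ← mul_assoc, ← pow_succ',
        Nat.sub_add_cancel (Nat.one_le_iff_ne_zero.mpr (pow_ne_zero _ hp.out.ne_zero))]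
    have hle : p ^ (n + 1) ≤ (p ^ (n + 1) - 1) * p := by
      have h1 : p ^ n + 1 ≤ p ^ (n + 1) :=
        Nat.succ_le_of_lt (Nat.pow_lt_pow_succ hp.out.one_lt)
      calc p ^ (n + 1) = p ^ n * p := by rw [pow_succ]
        _ ≤ (p ^ (n + 1) - 1) * p := Nat.mul_le_mul_right _ (by omega)
    rw [hb, mul_pow, ← pow_mul]
    exact Dvd.dvd.mul_right (by rw [← hsp (n + 1)]; exact pow_dvd_pow _ hle) _
  -- cancellation lemma in B
  have hkey : ∀ n (c c' : B), π (s (n + 1)) * c = π (s (n + 1)) * c' → c ^ p = c' ^ p := by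
    intro n c c' h
    obtain ⟨a, ha⟩ := hπsurj (c - c')
    have h1 : π (s (n + 1) * a) = 0 := by
      rw [map_mul, ha, mul_sub, h, sub_self]
    rw [hπ0] at h1
    have h2 : π (a ^ p) = 0 := by rw [hπ0]; exact hcancel n a h1
    rw [map_pow, ha, sub_pow_char] at h2
    linear_combination h2
  -- main proof
  ext x
  rw [RingHom.mem_ker, Ideal.mem_span_singleton]
  constructor
  · intro hx
    -- coefficients of x are nilpotent
    have hnil : ∀ n, Perfection.coeff B p n x ^ p ^ n = 0 := by
      intro n
      induction n with
      | zero => simpa using hx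
      | succ n ih =>
        rw [pow_succ', pow_mul, Perfection.coeff_pow_p' x n, ih]
    have hc : ∀ n, ∃ c : B, Perfection.coeff B p (n + 1) x = π (s (n + 1)) * c :=
      fun n => hdivB (n + 1) _ (hnil (n + 1))
    choose c hcspec using hc
    have hcompat : ∀ n, (fun n => c n ^ p) (n + 1) ^ p = (fun n => c n ^ p) n := by
      intro n
      apply hkey n
      have h1 : π (s (n + 1)) = π (s (n + 2)) ^ p := by rw [← map_pow, hs (n + 1)]
      rw [← hcspec n, ← Perfection.coeff_pow_p' x (n + 1), hcspec (n + 1), mul_pow, ← h1]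
    refine ⟨(⟨fun n => c n ^ p, hcompat⟩ : Perfection B p), ?_⟩
    apply Perfection.ext
    intro n
    erw [map_mul]
    rw [hpbar n, Perfection.coeff_mk]
    have h1 : π (s n) = π (s (n + 1)) ^ p := by rw [← map_pow, hs n]
    rw [h1, ← mul_pow, ← hcspec n, Perfection.coeff_pow_p' x n]
  · rintro ⟨y, rfl⟩
    rw [map_mul, hpbar 0, hs0]
    simp [π, Ideal.Quotient.eq_zero_iff_mem, Ideal.mem_span_singleton]
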